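/- Let R be a commutative ring and let ω ∈ R satisfy ω² + ω + 1 = 0 (so that ω³ = 1 and ω is a unit in R). Then in the ring of formal power series R[[q]] one has the identity ∏_{n≥1} (1−q^n)(1−q^{19n})⁷(1−ω²q^{19n})(1−ω⁻²q^{19n})(1−ω⁴q^{19n})(1−ω⁻⁴q^{19n})(1−ω⁸q^{19n})(1−ω⁻⁸q^{19n})(1−ω¹⁰q^{19n})(1−ω⁻¹⁰q^{19n})(1−ω¹⁴q^{19n})(1−ω⁻¹⁴q^{19n})(1−ω¹⁶q^{19n})(1−ω⁻¹⁶q^{19n}) · ((1−ωq^n)(1−ω⁻¹q^n))⁻¹ = ∏_{n≥1} (1−q^n)²(1−q^{19n})(1−q^{57n})⁶ · (1−q^{3n})⁻¹. -/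

import Mathlib

open PowerSeries LaurentPolynomial Finset

/-- The factor `1 - c·q^m` of an infinite product, as a formal power series. -/
noncomputable def factor {R : Type*} [CommRing R] (c : R) (m : ℕ) : PowerSeries R :=
  1 - PowerSeries.C c * PowerSeries.X ^ m

/-- The infinite product `∏_{n ≥ 1} f n` in `R[[q]]`, for a sequence of factors in which the
`n`-th factor is congruent to `1` modulo `q^n`: it is defined coefficientwise, the coefficient
of `q^m` being the (stabilized) coefficient of `q^m` in the partial product of the factors with
index `1, …, m+1`, which agrees with the limit of the partial products in the `q`-adic topology. -/
noncomputable def infiniteProd {R : Type*} [CommRing R] (f : ℕ → PowerSeries R) : PowerSeries R :=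
  PowerSeries.mk fun m => PowerSeries.coeff m (∏ n ∈ Finset.range (m + 1), f (n + 1))

lemma inv_helper {S : Type*} [CommRing S] {a b c : S} (ha : IsUnit a) (hc : IsUnit c)
    (h : a * b = c) : Ring.inverse a = b * Ring.inverse c := by
  calc Ring.inverse a = Ring.inverse a * (c * Ring.inverse c) := by
        rw [Ring.mul_inverse_cancel _ hc, mul_one]
    _ = (Ring.inverse a * a) * (b * Ring.inverse c) := by rw [← h]; ring
    _ = b * Ring.inverse c := by rw [Ring.inverse_mul_cancel _ ha, one_mul]

lemma key_tri {R : Type*} [CommRing R] (ω : R) (hω : ω ^ 2 + ω + 1 = 0) (m : ℕ) :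
    factor 1 m * (factor ω m * factor (ω ^ 2) m) = factor 1 (3 * m) := by
  have ha : (PowerSeries.C ω : PowerSeries R) ^ 2 + PowerSeries.C ω + 1 = 0 := by
    have := congrArg (PowerSeries.C : R →+* PowerSeries R) hω
    simpa [map_add, map_pow] using this
  simp only [factor, map_one, map_pow, one_mul]
  rw [pow_mul' (PowerSeries.X : PowerSeries R) 3 m]
  set a := (PowerSeries.C ω : PowerSeries R)
  set x := (PowerSeries.X : PowerSeries R) ^ m
  linear_combination (-x + a * x ^ 2 - (a - 1) * x ^ 3) * ha

lemma factor_isUnit {R : Type*} [CommRing R] (c : R) (m : ℕ) (hm : 0 < m) :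
    IsUnit (factor c m) := by
  rw [PowerSeries.isUnit_iff_constantCoeff]
  have : constantCoeff (factor c m) = 1 := by
    simp [factor, map_pow, constantCoeff_X, zero_pow hm.ne']
  rw [this]; exact isUnit_one

set_option maxHeartbeats 2000000 in
theorem crank19_product_identity {R : Type*} [CommRing R] (ω : R)
    (hω : ω ^ 2 + ω + 1 = 0) :
    (infiniteProd fun n =>
      factor 1 n *
      factor 1 (19 * n) ^ 7 *
      factor (ω ^ 2) (19 * n) *
      factor (Ring.inverse ω ^ 2) (19 * n) *
      factor (ω ^ 4) (19 * n) *
      factor (Ring.inverse ω ^ 4) (19 * n) *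
      factor (ω ^ 8) (19 * n) *
      factor (Ring.inverse ω ^ 8) (19 * n) *
      factor (ω ^ 10) (19 * n) *
      factor (Ring.inverse ω ^ 10) (19 * n) *
      factor (ω ^ 14) (19 * n) *
      factor (Ring.inverse ω ^ 14) (19 * n) *
      factor (ω ^ 16) (19 * n) *
      factor (Ring.inverse ω ^ 16) (19 * n) *
      Ring.inverse (factor (ω) n * factor (Ring.inverse ω) n)) =
    infiniteProd fun n =>
      factor (1 : R) n ^ 2 * factor (1 : R) (19 * n) * factor (1 : R) (57 * n) ^ 6 *
      Ring.inverse (factor (1 : R) (3 * n)) := by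
  have h3 : ω ^ 3 = 1 := by linear_combination (ω - 1) * hω
  have hu : IsUnit ω := IsUnit.of_mul_eq_one (ω ^ 2) (by linear_combination (ω - 1) * hω)
  have hinv : Ring.inverse ω = ω ^ 2 := by
    calc Ring.inverse ω = Ring.inverse ω * (ω * ω ^ 2) := by
          rw [show ω * ω ^ 2 = 1 by linear_combination (ω - 1) * hω, mul_one]
      _ = (Ring.inverse ω * ω) * ω ^ 2 := by ring
      _ = ω ^ 2 := by rw [Ring.inverse_mul_cancel _ hu, one_mul]
  -- reduce all powers of ω mod 3
  have p2 : Ring.inverse ω ^ 2 = ω := by rw [hinv]; linear_combination ω * h3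
  have p4 : ω ^ 4 = ω := by linear_combination ω * h3
  have p4' : Ring.inverse ω ^ 4 = ω ^ 2 := by rw [hinv]; linear_combination (ω ^ 5 + ω ^ 2) * h3
  have p8 : ω ^ 8 = ω ^ 2 := by linear_combination (ω ^ 5 + ω ^ 2) * h3
  have p8' : Ring.inverse ω ^ 8 = ω := by
    rw [hinv]; linear_combination (ω ^ 13 + ω ^ 10 + ω ^ 7 + ω ^ 4 + ω) * h3
  have p10 : ω ^ 10 = ω := by linear_combination (ω ^ 7 + ω ^ 4 + ω) * h3
  have p10' : Ring.inverse ω ^ 10 = ω ^ 2 := by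
    rw [hinv]
    linear_combination (ω ^ 17 + ω ^ 14 + ω ^ 11 + ω ^ 8 + ω ^ 5 + ω ^ 2) * h3
  have p14 : ω ^ 14 = ω ^ 2 := by linear_combination (ω ^ 11 + ω ^ 8 + ω ^ 5 + ω ^ 2) * h3
  have p14' : Ring.inverse ω ^ 14 = ω := by
    rw [hinv]
    linear_combination (ω ^ 25 + ω ^ 22 + ω ^ 19 + ω ^ 16 + ω ^ 13 + ω ^ 10 + ω ^ 7 + ω ^ 4 + ω) * h3
  have p16 : ω ^ 16 = ω := by linear_combination (ω ^ 13 + ω ^ 10 + ω ^ 7 + ω ^ 4 + ω) * h3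
  have p16' : Ring.inverse ω ^ 16 = ω ^ 2 := by
    rw [hinv]
    linear_combination (ω ^ 29 + ω ^ 26 + ω ^ 23 + ω ^ 20 + ω ^ 17 + ω ^ 14 + ω ^ 11 + ω ^ 8 +
      ω ^ 5 + ω ^ 2) * h3
  have main : ∀ k : ℕ, 0 < k →
      factor 1 k *
      factor 1 (19 * k) ^ 7 *
      factor (ω ^ 2) (19 * k) *
      factor (Ring.inverse ω ^ 2) (19 * k) *
      factor (ω ^ 4) (19 * k) *
      factor (Ring.inverse ω ^ 4) (19 * k) *
      factor (ω ^ 8) (19 * k) *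
      factor (Ring.inverse ω ^ 8) (19 * k) *
      factor (ω ^ 10) (19 * k) *
      factor (Ring.inverse ω ^ 10) (19 * k) *
      factor (ω ^ 14) (19 * k) *
      factor (Ring.inverse ω ^ 14) (19 * k) *
      factor (ω ^ 16) (19 * k) *
      factor (Ring.inverse ω ^ 16) (19 * k) *
      Ring.inverse (factor (ω) k * factor (Ring.inverse ω) k) =
      factor (1 : R) k ^ 2 * factor (1 : R) (19 * k) * factor (1 : R) (57 * k) ^ 6 *
      Ring.inverse (factor (1 : R) (3 * k)) := by
    intro k hkpos
    rw [p2, p4, p4', p8, p8', p10, p10', p14, p14', p16, p16', hinv]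
    -- the ω⁻¹ in the last Ring.inverse factor
    have hP : factor ω k * factor (ω ^ 2) k * factor (1 : R) k = factor (1 : R) (3 * k) := by
      rw [show factor ω k * factor (ω ^ 2) k * factor (1 : R) k
          = factor 1 k * (factor ω k * factor (ω ^ 2) k) by ring]
      exact key_tri ω hω k
    have hPu : IsUnit (factor ω k * factor (ω ^ 2) k) := by
      have := (factor_isUnit ω k hkpos).mul (factor_isUnit (ω ^ 2) k hkpos)
      exact this
    have h3u : IsUnit (factor (1 : R) (3 * k)) :=
      factor_isUnit 1 (3 * k) (by positivity)
    have hinvP : Ring.inverse (factor ω k * factor (ω ^ 2) k)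
        = factor (1 : R) k * Ring.inverse (factor (1 : R) (3 * k)) :=
      inv_helper hPu h3u hP
    have h19 : factor (1 : R) (19 * k) * (factor ω (19 * k) * factor (ω ^ 2) (19 * k))
        = factor (1 : R) (57 * k) := by
      have := key_tri ω hω (19 * k)
      rwa [show 3 * (19 * k) = 57 * k by ring] at this
    rw [hinvP]
    calc factor 1 k * factor 1 (19 * k) ^ 7 * factor (ω ^ 2) (19 * k) * factor ω (19 * k) *
          factor ω (19 * k) * factor (ω ^ 2) (19 * k) * factor (ω ^ 2) (19 * k) *
          factor ω (19 * k) * factor ω (19 * k) * factor (ω ^ 2) (19 * k) *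
          factor (ω ^ 2) (19 * k) * factor ω (19 * k) * factor ω (19 * k) *
          factor (ω ^ 2) (19 * k) *
          (factor (1 : R) k * Ring.inverse (factor (1 : R) (3 * k)))
        = factor 1 k ^ 2 * factor 1 (19 * k) *
          (factor (1 : R) (19 * k) * (factor ω (19 * k) * factor (ω ^ 2) (19 * k))) ^ 6 *
          Ring.inverse (factor (1 : R) (3 * k)) := by ring
      _ = factor (1 : R) k ^ 2 * factor (1 : R) (19 * k) * factor (1 : R) (57 * k) ^ 6 *
          Ring.inverse (factor (1 : R) (3 * k)) := by rw [h19]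

  have hprod : ∀ m : ℕ, (∏ n ∈ Finset.range (m + 1),
      (factor 1 (n + 1) *
      factor 1 (19 * (n + 1)) ^ 7 *
      factor (ω ^ 2) (19 * (n + 1)) *
      factor (Ring.inverse ω ^ 2) (19 * (n + 1)) *
      factor (ω ^ 4) (19 * (n + 1)) *
      factor (Ring.inverse ω ^ 4) (19 * (n + 1)) *
      factor (ω ^ 8) (19 * (n + 1)) *
      factor (Ring.inverse ω ^ 8) (19 * (n + 1)) *
      factor (ω ^ 10) (19 * (n + 1)) *
      factor (Ring.inverse ω ^ 10) (19 * (n + 1)) *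
      factor (ω ^ 14) (19 * (n + 1)) *
      factor (Ring.inverse ω ^ 14) (19 * (n + 1)) *
      factor (ω ^ 16) (19 * (n + 1)) *
      factor (Ring.inverse ω ^ 16) (19 * (n + 1)) *
      Ring.inverse (factor (ω) (n + 1) * factor (Ring.inverse ω) (n + 1)))) =
      ∏ n ∈ Finset.range (m + 1),
      (factor (1 : R) (n + 1) ^ 2 * factor (1 : R) (19 * (n + 1)) *
        factor (1 : R) (57 * (n + 1)) ^ 6 *
      Ring.inverse (factor (1 : R) (3 * (n + 1)))) := fun m =>
    Finset.prod_congr rfl fun n _ => main (n + 1) (Nat.succ_pos n)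
  unfold infiniteProd
  exact congrArg PowerSeries.mk (funext fun m => congrArg (PowerSeries.coeff m) (hprod m))
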